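/- For all n ≥ 4, a permutation π of {1,…,n} satisfies ssc(π) = n−2 if and only if at least one of the following holds: (a) π ends with the suffix n,2; (b) π ends with the suffix (n−1),1,n; (c) π_{n−2} = n and π_{n−1} = 1 (suffix n,1,x for some letter x); (d) π_{n−2} = n and π_n = 1 (suffix n,x,1 for some letter x); (e) π ends with the suffix (n−1),1 and the letter n occurs before the letter n−2 in π. -/

import Mathlib

/-- The largest letter of a word (`0` for the empty word). -/
def listMax (l : List ℕ) : ℕ := l.foldr max 0

lemma listMax_mem {l : List ℕ} (h : l ≠ []) : listMax l ∈ l := by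
  induction l with
  | nil => simp at h
  | cons a t ih =>
    rcases eq_or_ne t [] with rfl | ht
    · simp [listMax]
    · have ht' := ih ht
      have hcons : listMax (a :: t) = max a (listMax t) := rfl
      rcases le_total a (listMax t) with hle | hle
      · rw [hcons, max_eq_right hle]; exact List.mem_cons_of_mem _ ht'
      · rw [hcons, max_eq_left hle]; exact List.mem_cons_self

/-- The stack-sorting operator `S`: `S` of the empty word is the empty word, and
if `π` is nonempty, writing `π = L·m·R` where `m` is the greatest letter of `π`,
then `S(π) = S(L)·S(R)·m`. -/
def stackSort : List ℕ → List ℕ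
  | [] => []
  | x :: xs =>
    stackSort ((x :: xs).take ((x :: xs).idxOf (listMax (x :: xs)))) ++
      stackSort ((x :: xs).drop ((x :: xs).idxOf (listMax (x :: xs)) + 1)) ++
      [listMax (x :: xs)]
termination_by l => l.length
decreasing_by
  · have hm : listMax (x :: xs) ∈ x :: xs := listMax_mem (by simp)
    have hi : (x :: xs).idxOf (listMax (x :: xs)) < (x :: xs).length :=
      List.idxOf_lt_length_iff.mpr hm
    simp only [List.length_take, List.length_cons] at *
    omega
  · simp only [List.length_drop, List.length_cons]
    omega

/-- `π` is a permutation of `{1, …, n}`, viewed as a word containing each of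
`1, …, n` exactly once. -/
def IsPermWord (n : ℕ) (π : List ℕ) : Prop := π.Perm (List.range' 1 n)

/-- The stack-sorting complexity of `π`: the least `k ≥ 0` such that `S^k(π)`
is the identity word `1, 2, …, n` (where `n` is the length of `π`). -/
noncomputable def ssc (π : List ℕ) : ℕ :=
  sInf {k : ℕ | stackSort^[k] π = List.range' 1 π.length}

lemma le_listMax {l : List ℕ} {a : ℕ} (h : a ∈ l) : a ≤ listMax l := by
  induction l with
  | nil => simp at h
  | cons b t ih =>
    have : listMax (b :: t) = max b (listMax t) := rfl
    rcases List.mem_cons.mp h with rfl | h'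
    · rw [this]; exact le_max_left _ _
    · rw [this]; exact le_trans (ih h') (le_max_right _ _)

lemma listMax_le {l : List ℕ} {M : ℕ} (h : ∀ a ∈ l, a ≤ M) : listMax l ≤ M := by
  induction l with
  | nil => simp [listMax]
  | cons b t ih =>
    have hc : listMax (b :: t) = max b (listMax t) := rfl
    rw [hc]; exact max_le (h b (by simp)) (ih fun a ha => h a (by simp [ha]))

lemma listMax_split {L R : List ℕ} {m : ℕ} (hL : ∀ a ∈ L, a < m) (hR : ∀ a ∈ R, a < m) :
    listMax (L ++ m :: R) = m := by
  have h1 : m ≤ listMax (L ++ m :: R) := le_listMax (by simp)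
  have h2 : listMax (L ++ m :: R) ≤ m := by
    apply listMax_le; intro a ha
    rcases List.mem_append.mp ha with h | h
    · exact (hL a h).le
    · rcases List.mem_cons.mp h with rfl | h
      · rfl
      · exact (hR a h).le
  omega

lemma stackSort_nil : stackSort [] = [] := by rw [stackSort]

lemma stackSort_split (L R : List ℕ) (m : ℕ) (hL : ∀ a ∈ L, a < m) (hR : ∀ a ∈ R, a < m) :
    stackSort (L ++ m :: R) = stackSort L ++ stackSort R ++ [m] := by
  have hmax : listMax (L ++ m :: R) = m := listMax_split hL hR
  have hnm : m ∉ L := fun h => lt_irrefl m (hL m h)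
  have hidx : (L ++ m :: R).idxOf m = L.length := by
    rw [List.idxOf_append_of_notMem hnm]; simp
  have htake : (L ++ m :: R).take L.length = L := List.take_left ..
  have hdrop : (L ++ m :: R).drop (L.length + 1) = R := by
    have : L ++ m :: R = (L ++ [m]) ++ R := by simp
    rw [this, List.drop_left' (by simp)]
  obtain ⟨x, xs, hx⟩ : ∃ x xs, L ++ m :: R = x :: xs := by
    cases h : L ++ m :: R with
    | nil => exact absurd h (by simp)
    | cons x xs => exact ⟨x, xs, rfl⟩
  conv_lhs => rw [hx, stackSort]
  rw [← hx, hmax, hidx, htake, hdrop]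

lemma stackSort_perm (l : List ℕ) : (stackSort l).Perm l := by
  induction l using stackSort.induct with
  | case1 => simp [stackSort_nil]
  | case2 x xs ih1 ih2 =>
    set l := x :: xs with hl
    have hm : listMax l ∈ l := listMax_mem (by simp [hl])
    have hi : l.idxOf (listMax l) < l.length := List.idxOf_lt_length_iff.mpr hm
    have hget : l[l.idxOf (listMax l)] = listMax l := List.getElem_idxOf hi
    have hsplit : l = l.take (l.idxOf (listMax l)) ++ listMax l :: l.drop (l.idxOf (listMax l) + 1) := by
      conv_lhs => rw [← List.take_append_drop (l.idxOf (listMax l)) l]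
      rw [List.drop_eq_getElem_cons hi, hget]
    rw [stackSort]
    refine ((ih1.append ih2).append (List.Perm.refl _)).trans ?_
    rw [List.append_assoc]
    refine (List.Perm.append_left _ (List.perm_append_singleton _ _)).trans ?_
    rw [← hsplit]

lemma length_stackSort (l : List ℕ) : (stackSort l).length = l.length :=
  (stackSort_perm l).length_eq

lemma mem_stackSort {a : ℕ} {l : List ℕ} : a ∈ stackSort l ↔ a ∈ l :=
  (stackSort_perm l).mem_iff

lemma stackSort_concat_max {l : List ℕ} (h : l ≠ []) :
    ∃ u, stackSort l = u ++ [listMax l] := by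
  obtain ⟨x, xs, rfl⟩ : ∃ x xs, l = x :: xs := by
    cases l with
    | nil => exact absurd rfl h
    | cons x xs => exact ⟨x, xs, rfl⟩
  rw [stackSort]
  exact ⟨_, rfl⟩

lemma stackSort_singleton (a : ℕ) : stackSort [a] = [a] := by
  have := stackSort_split [] [] a (by simp) (by simp)
  simpa [stackSort_nil] using this

lemma stackSort_concat (l : List ℕ) (m : ℕ) (h : ∀ a ∈ l, a < m) :
    stackSort (l ++ [m]) = stackSort l ++ [m] := by
  have := stackSort_split l [] m h (by simp)
  simpa [stackSort_nil] using this

lemma stackSort_pair {a b : ℕ} (hab : a ≠ b) : stackSort [a, b] = [min a b, max a b] := by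
  rcases lt_or_gt_of_ne hab with h | h
  · have := stackSort_split [a] [] b (by simpa using h) (by simp)
    simp only [List.singleton_append, stackSort_nil] at this
    rw [this, stackSort_singleton]
    simp [min_eq_left h.le, max_eq_right h.le]
  · have := stackSort_split [] [b] a (by simp) (by simpa using h)
    simp only [List.nil_append, stackSort_nil, List.nil_append] at this
    rw [show ([a,b] : List ℕ) = a :: [b] from rfl, this, stackSort_singleton]
    simp [min_eq_right h.le, max_eq_left h.le]

lemma range'_eq_concat (n : ℕ) (h : 1 ≤ n) : List.range' 1 n = List.range' 1 (n-1) ++ [n] := by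
  conv_lhs => rw [show n = n - 1 + 1 by omega]
  rw [List.range'_concat (step := 1) (s := 1) (n := n-1), show 1 + 1*(n-1) = n by omega]

lemma mem_range'_iff {a n : ℕ} : a ∈ List.range' 1 n ↔ 1 ≤ a ∧ a ≤ n := by
  rw [List.mem_range'_1]; omega

lemma stackSort_range' (n : ℕ) : stackSort (List.range' 1 n) = List.range' 1 n := by
  induction n with
  | zero => simp [stackSort_nil]
  | succ n ih =>
    rw [range'_eq_concat (n+1) (by omega)]
    simp only [Nat.add_sub_cancel]
    rw [stackSort_concat _ _ (fun a ha => by rw [mem_range'_iff] at ha; omega), ih]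

lemma iterate_concat (k : ℕ) (l : List ℕ) (m : ℕ) (h : ∀ a ∈ l, a < m) :
    stackSort^[k] (l ++ [m]) = stackSort^[k] l ++ [m] := by
  induction k generalizing l with
  | zero => simp
  | succ k ih =>
    rw [Function.iterate_succ_apply, Function.iterate_succ_apply,
      stackSort_concat l m h, ih _ (fun a ha => h a (mem_stackSort.mp ha))]

lemma nodup_length_le {l : List ℕ} (hl : l.Nodup) {k : ℕ} (h : ∀ a ∈ l, 1 ≤ a ∧ a ≤ k) :
    l.length ≤ k := by
  classical
  have h1 : l.toFinset ⊆ Finset.Icc 1 k := by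
    intro a ha; rw [List.mem_toFinset] at ha; exact Finset.mem_Icc.mpr (h a ha)
  have := Finset.card_le_card h1
  rwa [List.toFinset_card_of_nodup hl, Nat.card_Icc, Nat.add_sub_cancel] at this

-- splitting a permutation word at its top letter
lemma split_plan {n : ℕ} (hn : 1 ≤ n) {l : List ℕ} (hl : l.Perm (List.range' 1 n)) :
    ∃ L R, l = L ++ n :: R ∧ (∀ a ∈ L ++ R, 1 ≤ a ∧ a < n) ∧
      (L ++ R).Perm (List.range' 1 (n-1)) ∧ (L ++ n :: R).Nodup := by
  have hnd : l.Nodup := hl.nodup_iff.mpr List.nodup_range'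
  have hmem : n ∈ l := hl.mem_iff.mpr (mem_range'_iff.mpr ⟨hn, le_refl n⟩)
  obtain ⟨L, R, rfl⟩ := List.append_of_mem hmem
  refine ⟨L, R, rfl, ?_, ?_, hnd⟩
  · intro a ha
    have hal : a ∈ L ++ n :: R := by
      rcases List.mem_append.mp ha with h | h
      · exact List.mem_append.mpr (Or.inl h)
      · exact List.mem_append.mpr (Or.inr (List.mem_cons_of_mem _ h))
    have hb := mem_range'_iff.mp (hl.mem_iff.mp hal)
    have hne : a ≠ n := by
      rintro rfl
      rcases List.mem_append.mp ha with h | h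
      · exact (List.disjoint_of_nodup_append hnd) h (by simp)
      · have := List.Nodup.of_append_right hnd
        rw [List.nodup_cons] at this
        exact this.1 h
    omega
  · have h1 : (L ++ n :: R).Perm (n :: (L ++ R)) := List.perm_middle
    have h2 : (L ++ n :: R).Perm (List.range' 1 (n-1) ++ [n]) := by
      rwa [← range'_eq_concat n hn]
    have h3 : (List.range' 1 (n-1) ++ [n]).Perm (n :: List.range' 1 (n-1)) :=
      List.perm_append_singleton _ _
    exact (h1.symm.trans h2).trans h3 |>.cons_inv

lemma sortable : ∀ (n : ℕ) (l : List ℕ), l.Perm (List.range' 1 n) →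
    ∃ k, stackSort^[k] l = List.range' 1 n := by
  intro n
  induction n using Nat.strong_induction_on with
  | _ n ih =>
    intro l hl
    rcases Nat.eq_zero_or_pos n with rfl | hn
    · have : l = [] := List.Perm.eq_nil (by simpa using hl)
      exact ⟨0, by simp [this]⟩
    · obtain ⟨L, R, rfl, hb, hperm, hnd⟩ := split_plan hn hl
      have hσ : (stackSort L ++ stackSort R).Perm (List.range' 1 (n-1)) :=
        ((stackSort_perm L).append (stackSort_perm R)).trans hperm
      obtain ⟨k, hk⟩ := ih (n-1) (by omega) _ hσ
      refine ⟨k + 1, ?_⟩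
      rw [Function.iterate_succ_apply, stackSort_split L R n
        (fun a ha => (hb a (List.mem_append.mpr (Or.inl ha))).2)
        (fun a ha => (hb a (List.mem_append.mpr (Or.inr ha))).2)]
      rw [iterate_concat k _ n (fun a ha => by
        have := hb a ((((stackSort_perm L).append (stackSort_perm R)).mem_iff).mp ha); exact this.2)]
      rw [hk, ← range'_eq_concat n hn]

lemma ssc_eq_iff {n k : ℕ} {l : List ℕ} (hl : l.Perm (List.range' 1 n)) :
    ssc l = k ↔ (stackSort^[k] l = List.range' 1 n ∧
      ∀ j < k, stackSort^[j] l ≠ List.range' 1 n) := by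
  have hlen : l.length = n := by simpa using hl.length_eq
  unfold ssc
  rw [hlen]
  set A := {j : ℕ | stackSort^[j] l = List.range' 1 n} with hA
  have hmemA : ∀ j, j ∈ A ↔ stackSort^[j] l = List.range' 1 n := fun j => Iff.rfl
  have hne : A.Nonempty := by
    obtain ⟨k0, hk0⟩ := sortable n l hl
    exact ⟨k0, hk0⟩
  constructor
  · rintro rfl
    refine ⟨Nat.sInf_mem hne, fun j hj hj' => ?_⟩
    have : sInf A ≤ j := Nat.sInf_le (show j ∈ A from hj')
    omega
  · rintro ⟨h1, h2⟩
    refine le_antisymm (Nat.sInf_le (show k ∈ A from h1)) ?_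
    by_contra h
    push_neg at h
    exact h2 _ h (Nat.sInf_mem hne)

lemma ssc_recursion {n : ℕ} (hn : 1 ≤ n) {L R : List ℕ}
    (hb : ∀ a ∈ L ++ R, 1 ≤ a ∧ a < n)
    (hperm : (L ++ R).Perm (List.range' 1 (n-1)))
    (hne : L ++ n :: R ≠ List.range' 1 n) :
    ssc (L ++ n :: R) = ssc (stackSort L ++ stackSort R) + 1 := by
  have hbL : ∀ a ∈ L, a < n := fun a ha => (hb a (List.mem_append.mpr (Or.inl ha))).2
  have hbR : ∀ a ∈ R, a < n := fun a ha => (hb a (List.mem_append.mpr (Or.inr ha))).2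
  have hπ : (L ++ n :: R).Perm (List.range' 1 n) := by
    have h1 : (L ++ n :: R).Perm (n :: (L ++ R)) := List.perm_middle
    have h3 : (List.range' 1 (n-1) ++ [n]).Perm (n :: List.range' 1 (n-1)) :=
      List.perm_append_singleton _ _
    rw [range'_eq_concat n hn]
    exact h1.trans ((hperm.cons n).trans h3.symm)
  have hσ : (stackSort L ++ stackSort R).Perm (List.range' 1 (n-1)) :=
    ((stackSort_perm L).append (stackSort_perm R)).trans hperm
  have hbσ : ∀ a ∈ stackSort L ++ stackSort R, a < n := fun a ha => by
    rcases List.mem_append.mp ha with h | h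
    · exact hbL a (mem_stackSort.mp h)
    · exact hbR a (mem_stackSort.mp h)
  have key : ∀ k, stackSort^[k+1] (L ++ n :: R) =
      stackSort^[k] (stackSort L ++ stackSort R) ++ [n] := by
    intro k
    rw [Function.iterate_succ_apply, stackSort_split L R n hbL hbR,
      iterate_concat k _ n hbσ]
  have hiff : ∀ k, (stackSort^[k+1] (L ++ n :: R) = List.range' 1 n ↔
      stackSort^[k] (stackSort L ++ stackSort R) = List.range' 1 (n-1)) := by
    intro k
    rw [key k, range'_eq_concat n hn]
    exact ⟨fun h => (List.append_left_inj _).mp h, fun h => by rw [h]⟩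
  have h0 : stackSort^[0] (L ++ n :: R) ≠ List.range' 1 n := by simpa using hne
  have hlenπ : (L ++ n :: R).length = n := by simpa using hπ.length_eq
  have hlenσ : (stackSort L ++ stackSort R).length = n - 1 := by simpa using hσ.length_eq
  obtain ⟨k0, hk0⟩ := sortable (n-1) _ hσ
  unfold ssc
  rw [hlenπ, hlenσ]
  set A := {k : ℕ | stackSort^[k] (L ++ n :: R) = List.range' 1 n} with hA
  set B := {k : ℕ | stackSort^[k] (stackSort L ++ stackSort R) = List.range' 1 (n-1)} with hB
  have hBne : B.Nonempty := ⟨k0, hk0⟩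
  have hAne : A.Nonempty := ⟨k0 + 1, (hiff k0).mpr hk0⟩
  have h1 : sInf A ≤ sInf B + 1 := Nat.sInf_le ((hiff (sInf B)).mpr (Nat.sInf_mem hBne))
  have h2 : sInf B + 1 ≤ sInf A := by
    have hmem : sInf A ∈ A := Nat.sInf_mem hAne
    have hpos : sInf A ≠ 0 := fun h => h0 (by rw [← h]; exact hmem)
    obtain ⟨j, hj⟩ : ∃ j, sInf A = j + 1 := ⟨sInf A - 1, by omega⟩
    have : j ∈ B := (hiff j).mp (by rw [← hj]; exact hmem)
    have := Nat.sInf_le this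
    omega
  omega

lemma concat_inj' {l₁ l₂ : List ℕ} {a b : ℕ} (h : l₁ ++ [a] = l₂ ++ [b]) :
    l₁ = l₂ ∧ a = b := by
  have := List.concat_inj.mp (by simpa using h)
  simpa using this

lemma ends_trans {π B s : List ℕ} (hB : ∃ u, π = u ++ B) (hs : ∃ w, π = w ++ s)
    (h : s.length ≤ B.length) : ∃ w', B = w' ++ s := by
  obtain ⟨u, rfl⟩ := hB
  obtain ⟨w, hw⟩ := hs
  have h1 : s <:+ u ++ B := ⟨w, hw.symm⟩
  have h2 : B <:+ u ++ B := ⟨u, rfl⟩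
  obtain ⟨w', hw'⟩ := List.suffix_of_suffix_length_le h1 h2 h
  exact ⟨w', hw'.symm⟩

lemma nodup_of_split {L R : List ℕ} {m : ℕ} (h : (L ++ m :: R).Nodup) :
    m ∉ L ∧ m ∉ R ∧ L.Nodup ∧ R.Nodup := by
  refine ⟨fun hm => (List.disjoint_of_nodup_append h) hm (by simp), ?_, h.of_append_left, ?_⟩
  · have := h.of_append_right
    rw [List.nodup_cons] at this
    exact this.1
  · have := h.of_append_right
    rw [List.nodup_cons] at this
    exact this.2

lemma key_lemma {M : ℕ} (hM : 3 ≤ M) {R : List ℕ} (hnd : R.Nodup)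
    (hb : ∀ a ∈ R, 1 ≤ a ∧ a ≤ M) (hlen : 3 ≤ R.length) :
    (∃ w, stackSort R = w ++ [M-1, 1, M]) ↔ ((∃ w, R = w ++ [M, 1]) ∧ (M-1) ∈ R) := by
  constructor
  · rintro ⟨w, hw⟩
    have hMmem : M ∈ R := by
      have : M ∈ stackSort R := by rw [hw]; simp
      exact mem_stackSort.mp this
    obtain ⟨L₂, R₂, rfl⟩ := List.append_of_mem hMmem
    obtain ⟨hML, hMR, hndL, hndR⟩ := nodup_of_split hnd
    have hbL : ∀ a ∈ L₂, a < M := fun a ha => by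
      have := hb a (by simp [ha]); rcases this with ⟨h1, h2⟩
      exact lt_of_le_of_ne h2 (fun h => hML (h ▸ ha))
    have hbR : ∀ a ∈ R₂, a < M := fun a ha => by
      have := hb a (by simp [ha]); rcases this with ⟨h1, h2⟩
      exact lt_of_le_of_ne h2 (fun h => hMR (h ▸ ha))
    rw [stackSort_split L₂ R₂ M hbL hbR] at hw
    have hw2 : stackSort L₂ ++ stackSort R₂ = w ++ [M-1, 1] := by
      refine (concat_inj' (a := M) (b := M) ?_).1
      rw [hw]; simp
    have hlentot : 2 ≤ L₂.length + R₂.length := by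
      have := hlen; simp [List.length_append] at this; omega
    match R₂, hndR, hbR, hw2, hlentot with
    | [], _, _, hw2, hlentot =>
      rw [stackSort_nil, List.append_nil] at hw2
      have hLne : L₂ ≠ [] := by
        intro h; rw [h, stackSort_nil] at hw2
        exact absurd hw2.symm (by simp)
      obtain ⟨u, hu⟩ := stackSort_concat_max hLne
      have h3 : u ++ [listMax L₂] = (w ++ [M-1]) ++ [1] := by
        rw [← hu, hw2]; simp
      have hmax := (concat_inj' h3).2
      have hble : ∀ a ∈ L₂, 1 ≤ a ∧ a ≤ 1 := fun a ha => by
        have h1 := (hb a (by simp [ha])).1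
        have h2 := le_listMax ha
        omega
      have := nodup_length_le hndL hble
      simp at hlentot
      omega
    | [y], _, _, hw2, _ =>
      rw [stackSort_singleton] at hw2
      have hL2 : stackSort L₂ ++ [y] = (w ++ [M-1]) ++ [1] := by
        rw [hw2]; simp
      obtain ⟨hSL, hy⟩ := concat_inj' hL2
      have hLne : L₂ ≠ [] := by
        intro h; rw [h, stackSort_nil] at hSL
        exact absurd hSL.symm (by simp)
      obtain ⟨u, hu⟩ := stackSort_concat_max hLne
      rw [hu] at hSL
      have hmax := (concat_inj' hSL).2
      have hmem : (M - 1) ∈ L₂ := hmax ▸ listMax_mem hLne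
      subst hy
      exact ⟨⟨L₂, by simp⟩, by simp [hmem]⟩
    | y1 :: y2 :: t, hndR2, hbR2, hw2, _ =>
      obtain ⟨u, hu⟩ := stackSort_concat_max (l := y1 :: y2 :: t) (by simp)
      have h3 : (stackSort L₂ ++ u) ++ [listMax (y1 :: y2 :: t)] = (w ++ [M-1]) ++ [1] := by
        rw [List.append_assoc, ← hu, hw2]; simp
      have hmax := (concat_inj' h3).2
      have hble : ∀ a ∈ y1 :: y2 :: t, 1 ≤ a ∧ a ≤ 1 := fun a ha => by
        have h1 := (hb a (List.mem_append.mpr (Or.inr (List.mem_cons_of_mem _ ha)))).1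
        have h2 := le_listMax ha
        omega
      have := nodup_length_le hndR2 hble
      simp at this
  · rintro ⟨⟨w, rfl⟩, hmem⟩
    have hnd' : (w ++ M :: [1]).Nodup := by simpa using hnd
    obtain ⟨hMw, _, hndw, _⟩ := nodup_of_split hnd'
    have hbw : ∀ a ∈ w, a < M := fun a ha => by
      have := hb a (by simp [ha])
      exact lt_of_le_of_ne this.2 (fun h => hMw (h ▸ ha))
    have hss : stackSort (w ++ [M, 1]) = stackSort w ++ [1, M] := by
      have := stackSort_split w [1] M hbw (by simp; omega)
      rw [show w ++ M :: [1] = w ++ [M, 1] by simp] at this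
      rw [this, stackSort_singleton]
      simp
    have hmw : (M - 1) ∈ w := by
      rcases (by simpa using hmem : (M-1) ∈ w ∨ (M-1) = M ∨ (M-1) = 1) with h | h | h
      · exact h
      · omega
      · omega
    have hwne : w ≠ [] := fun h => by simp [h] at hmw
    have hmaxw : listMax w = M - 1 := by
      have h1 : M - 1 ≤ listMax w := le_listMax hmw
      have h2 : listMax w ≤ M - 1 := listMax_le (fun a ha => by
        have := hbw a ha; omega)
      omega
    obtain ⟨u, hu⟩ := stackSort_concat_max hwne
    rw [hmaxw] at hu
    exact ⟨u, by rw [hss, hu]; simp⟩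

def Cond (n : ℕ) (π : List ℕ) : Prop :=
  (∃ w : List ℕ, π = w ++ [n, 2]) ∨
  (∃ w : List ℕ, π = w ++ [n - 1, 1, n]) ∨
  (∃ (w : List ℕ) (x : ℕ), π = w ++ [n, 1, x]) ∨
  (∃ (w : List ℕ) (x : ℕ), π = w ++ [n, x, 1]) ∨
  ((∃ w : List ℕ, π = w ++ [n - 1, 1]) ∧ ([n, n - 2] : List ℕ).Sublist π)

lemma nodup_stackSort {l : List ℕ} (h : l.Nodup) : (stackSort l).Nodup :=
  (stackSort_perm l).nodup_iff.mpr h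

lemma cond_equiv {n : ℕ} (hn : 4 ≤ n) {L R : List ℕ}
    (hnd : (L ++ n :: R).Nodup)
    (hb : ∀ a ∈ L ++ R, 1 ≤ a ∧ a < n)
    (hperm : (L ++ R).Perm (List.range' 1 (n-1))) :
    Cond n (L ++ n :: R) ↔ Cond (n-1) (stackSort L ++ stackSort R) := by
  obtain ⟨hnL, hnR, ndL, ndR⟩ := nodup_of_split hnd
  have hbL : ∀ a ∈ L, 1 ≤ a ∧ a < n := fun a ha => hb a (by simp [ha])
  have hbR : ∀ a ∈ R, 1 ≤ a ∧ a < n := fun a ha => hb a (by simp [ha])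
  have hlensum : L.length + R.length = n - 1 := by simpa using hperm.length_eq
  have hcomplete : ∀ a, 1 ≤ a → a ≤ n - 1 → a ∈ L ∨ a ∈ R := fun a h1 h2 => by
    have : a ∈ L ++ R := hperm.mem_iff.mpr (mem_range'_iff.mpr ⟨h1, h2⟩)
    simpa using this
  rcases R with _ | ⟨r1, R1⟩
  -- ===================== case R = [] =====================
  · simp only [List.append_nil] at hlensum hperm hbL hcomplete ⊢
    have hLlen : L.length = n - 1 := hlensum
    have hLne : L ≠ [] := by intro h; rw [h] at hLlen; simp at hLlen; omega
    have hmemL : (n-1) ∈ L := by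
      rcases hcomplete (n-1) (by omega) (le_refl _) with h | h
      · exact h
      · simp at h
    have hmemL2 : (n-2) ∈ L := by
      rcases hcomplete (n-2) (by omega) (by omega) with h | h
      · exact h
      · simp at h
    have hmaxL : listMax L = n - 1 := by
      have h1 := le_listMax hmemL
      have h2 : listMax L ≤ n - 1 := listMax_le (fun a ha => by have := (hbL a ha).2; omega)
      omega
    obtain ⟨u, hu⟩ := stackSort_concat_max hLne
    rw [hmaxL] at hu
    have hndS : (stackSort L).Nodup := nodup_stackSort ndL
    have hσ : stackSort L ++ stackSort [] = stackSort L := by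
      rw [stackSort_nil, List.append_nil]
    have h1 : Cond n (L ++ n :: []) ↔ (∃ w, L = w ++ [n-1, 1]) := by
      constructor
      · rintro (⟨w, h⟩ | ⟨w, h⟩ | ⟨w, x, h⟩ | ⟨w, x, h⟩ | ⟨⟨w, h⟩, -⟩)
        · have h' : L ++ [n] = (w ++ [n]) ++ [2] := by rw [h]; simp
          have := (concat_inj' h').2; omega
        · have h' : L ++ [n] = (w ++ [n-1, 1]) ++ [n] := by rw [h]; simp
          exact ⟨w, (concat_inj' h').1⟩
        · have h' : L ++ [n] = (w ++ [n, 1]) ++ [x] := by rw [h]; simp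
          have hL := (concat_inj' h').1
          exact absurd (by rw [hL]; simp : n ∈ L) hnL
        · have h' : L ++ [n] = (w ++ [n, x]) ++ [1] := by rw [h]; simp
          have := (concat_inj' h').2; omega
        · have h' : L ++ [n] = (w ++ [n-1]) ++ [1] := by rw [h]; simp
          have := (concat_inj' h').2; omega
      · rintro ⟨w, rfl⟩
        exact Or.inr (Or.inl ⟨w, by simp⟩)
    have hkey := key_lemma (M := n-1) (by omega) ndL
      (fun a ha => ⟨(hbL a ha).1, by have := (hbL a ha).2; omega⟩) (by omega)
    have h2 : Cond (n-1) (stackSort L ++ stackSort []) ↔ (∃ w, L = w ++ [n-1, 1]) := by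
      rw [hσ]
      constructor
      · rintro (⟨w, h⟩ | ⟨w, h⟩ | ⟨w, x, h⟩ | ⟨w, x, h⟩ | ⟨⟨w, h⟩, -⟩)
        · rw [hu] at h
          have h' : u ++ [n-1] = (w ++ [n-1]) ++ [2] := by rw [h]; simp
          have := (concat_inj' h').2; omega
        · exact (hkey.mp ⟨w, h⟩).1
        · rw [hu] at h
          have h' : u ++ [n-1] = (w ++ [n-1, 1]) ++ [x] := by rw [h]; simp
          obtain ⟨h1', h2'⟩ := concat_inj' h'
          have : (n-1) ∈ u := by rw [h1']; simp
          have hnd2 := hndS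
          rw [hu] at hnd2
          exact absurd this (nodup_of_split (by simpa using hnd2)).1
        · rw [hu] at h
          have h' : u ++ [n-1] = (w ++ [n-1, x]) ++ [1] := by rw [h]; simp
          have := (concat_inj' h').2; omega
        · rw [hu] at h
          have h' : u ++ [n-1] = (w ++ [n-1-1]) ++ [1] := by rw [h]; simp
          have := (concat_inj' h').2; omega
      · intro hP
        exact Or.inr (Or.inl (hkey.mpr ⟨hP, by
          have : n - 1 - 1 = n - 2 := by omega
          rw [this]; exact hmemL2⟩))
    rw [h1, h2]
  rcases R1 with _ | ⟨r2, R2⟩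
  -- ===================== case R = [r1] =====================
  · have hr1 : 1 ≤ r1 ∧ r1 < n := hbR r1 (by simp)
    have hnr1 : n ≠ r1 := by intro h; exact hnR (by simp [h])
    have hLlen : L.length = n - 2 := by simp at hlensum; omega
    have hLne : L ≠ [] := by intro h; rw [h] at hLlen; simp at hLlen; omega
    obtain ⟨u, hu⟩ := stackSort_concat_max hLne
    have hndS : (stackSort L).Nodup := nodup_stackSort ndL
    have hmaxle : listMax L ≤ n - 1 := listMax_le (fun a ha => by have := (hbL a ha).2; omega)
    have hσ : stackSort L ++ stackSort [r1] = stackSort L ++ [r1] := by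
      rw [stackSort_singleton]
    have h1 : Cond n (L ++ n :: [r1]) ↔ r1 = 2 := by
      constructor
      · rintro (⟨w, h⟩ | ⟨w, h⟩ | ⟨w, x, h⟩ | ⟨w, x, h⟩ | ⟨⟨w, h⟩, -⟩)
        · have h' : (L ++ [n]) ++ [r1] = (w ++ [n]) ++ [2] := by simpa using h
          exact (concat_inj' h').2
        · have h' : (L ++ [n]) ++ [r1] = (w ++ [n-1, 1]) ++ [n] := by simpa using h
          have := (concat_inj' h').2
          exact absurd this.symm hnr1
        · have h' : (L ++ [n]) ++ [r1] = (w ++ [n, 1]) ++ [x] := by simpa using h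
          have h'' : L ++ [n] = (w ++ [n]) ++ [1] := by rw [(concat_inj' h').1]; simp
          have := (concat_inj' h'').2; omega
        · have h' : (L ++ [n]) ++ [r1] = (w ++ [n, x]) ++ [1] := by simpa using h
          have h'' : L ++ [n] = (w ++ [n]) ++ [x] := by rw [(concat_inj' h').1]; simp
          obtain ⟨hL', hx⟩ := concat_inj' h''
          exact absurd (by rw [hL']; simp : n ∈ L) hnL
        · have h' : (L ++ [n]) ++ [r1] = (w ++ [n-1]) ++ [1] := by simpa using h
          have := (concat_inj' (concat_inj' h').1).2
          omega
      · rintro rfl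
        exact Or.inl ⟨L, by simp⟩
    have h2 : Cond (n-1) (stackSort L ++ stackSort [r1]) ↔ r1 = 2 := by
      rw [hσ]
      constructor
      · rintro (⟨w, h⟩ | ⟨w, h⟩ | ⟨w, x, h⟩ | ⟨w, x, h⟩ | ⟨⟨w, h⟩, -⟩)
        · have h' : stackSort L ++ [r1] = (w ++ [n-1]) ++ [2] := by rw [h]; simp
          exact (concat_inj' h').2
        · -- σ = w ++ [n-1-1, 1, n-1] : forces listMax L = 1
          have h' : stackSort L ++ [r1] = (w ++ [n-1-1, 1]) ++ [n-1] := by rw [h]; simp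
          have hSL : stackSort L = (w ++ [n-1-1]) ++ [1] := by rw [(concat_inj' h').1]; simp
          rw [hu] at hSL
          have hmax1 := (concat_inj' hSL).2
          have hlen1 := nodup_length_le (k := 1) ndL (fun a ha => by
            have := (hbL a ha).1
            have h2 := le_listMax ha
            omega)
          omega
        · have h' : stackSort L ++ [r1] = (w ++ [n-1, 1]) ++ [x] := by rw [h]; simp
          have hSL : stackSort L = (w ++ [n-1]) ++ [1] := by rw [(concat_inj' h').1]; simp
          rw [hu] at hSL
          have hmax1 := (concat_inj' hSL).2
          have hlen1 := nodup_length_le (k := 1) ndL (fun a ha => by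
            have := (hbL a ha).1
            have h2 := le_listMax ha
            omega)
          omega
        · -- σ = w ++ [n-1, x, 1] : r1 = 1, then n-1 ∈ L, contradiction with nodup
          have h' : stackSort L ++ [r1] = (w ++ [n-1, x]) ++ [1] := by rw [h]; simp
          obtain ⟨hSL, hr⟩ := concat_inj' h'
          have hSL' : stackSort L = (w ++ [n-1]) ++ [x] := by rw [hSL]; simp
          rw [hu] at hSL'
          obtain ⟨hueq, hxeq⟩ := concat_inj' hSL'
          have hmemL : (n-1) ∈ L := by
            rcases hcomplete (n-1) (by omega) (le_refl _) with hh | hh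
            · exact hh
            · simp at hh; omega
          have hmaxL : listMax L = n - 1 := by
            have := le_listMax hmemL; omega
          have : (n-1) ∈ u := by rw [hueq]; simp
          have hnd2 := hndS
          rw [hu, hmaxL] at hnd2
          exact absurd this (nodup_of_split (by simpa using hnd2)).1
        · -- σ = w ++ [n-2, 1] : r1 = 1, listMax L = n-2 but n-1 ∈ L
          have h' : stackSort L ++ [r1] = (w ++ [n-1-1]) ++ [1] := by rw [h]; simp
          obtain ⟨hSL, hr⟩ := concat_inj' h'
          rw [hu] at hSL
          have hmax := (concat_inj' hSL).2
          have hmemL : (n-1) ∈ L := by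
            rcases hcomplete (n-1) (by omega) (le_refl _) with hh | hh
            · exact hh
            · simp at hh; omega
          have := le_listMax hmemL
          omega
      · rintro rfl
        have hmemL : (n-1) ∈ L := by
          rcases hcomplete (n-1) (by omega) (le_refl _) with hh | hh
          · exact hh
          · simp at hh; omega
        have hmaxL : listMax L = n - 1 := by
          have := le_listMax hmemL; omega
        rw [hu, hmaxL]
        exact Or.inl ⟨u, by simp⟩
    rw [h1, h2]
  rcases R2 with _ | ⟨r3, R3⟩
  -- ===================== case R = [r1, r2] =====================
  · have hr1 : 1 ≤ r1 ∧ r1 < n := hbR r1 (by simp)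
    have hr2 : 1 ≤ r2 ∧ r2 < n := hbR r2 (by simp)
    have hne12 : r1 ≠ r2 := by
      have := ndR; simp at this; exact this
    have hLlen : L.length = n - 3 := by simp at hlensum; omega
    have hLne : L ≠ [] := by intro h; rw [h] at hLlen; simp at hLlen; omega
    obtain ⟨u, hu⟩ := stackSort_concat_max hLne
    have hndS : (stackSort L).Nodup := nodup_stackSort ndL
    have hmaxle : listMax L ≤ n - 1 := listMax_le (fun a ha => by have := (hbL a ha).2; omega)
    set p := min r1 r2 with hp
    set q := max r1 r2 with hq
    have hpq : p < q := by omega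
    have hp1 : 1 ≤ p := by omega
    have hqn : q < n := by omega
    have hpair : stackSort [r1, r2] = [p, q] := stackSort_pair hne12
    have h1 : Cond n (L ++ n :: [r1, r2]) ↔ (r1 = 1 ∨ r2 = 1) := by
      constructor
      · rintro (⟨w, h⟩ | ⟨w, h⟩ | ⟨w, x, h⟩ | ⟨w, x, h⟩ | ⟨⟨w, h⟩, -⟩)
        · have h' : ((L ++ [n]) ++ [r1]) ++ [r2] = (w ++ [n]) ++ [2] := by simpa using h
          have h'' := (concat_inj' (concat_inj' h').1).2
          omega
        · have h' : ((L ++ [n]) ++ [r1]) ++ [r2] = ((w ++ [n-1]) ++ [1]) ++ [n] := by simpa using h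
          have := (concat_inj' h').2
          omega
        · have h' : ((L ++ [n]) ++ [r1]) ++ [r2] = ((w ++ [n]) ++ [1]) ++ [x] := by simpa using h
          have := (concat_inj' (concat_inj' h').1).2
          exact Or.inl this
        · have h' : ((L ++ [n]) ++ [r1]) ++ [r2] = ((w ++ [n]) ++ [x]) ++ [1] := by simpa using h
          exact Or.inr (concat_inj' h').2
        · have h' : ((L ++ [n]) ++ [r1]) ++ [r2] = (w ++ [n-1]) ++ [1] := by simpa using h
          exact Or.inr (concat_inj' h').2
      · rintro (rfl | rfl)
        · exact Or.inr (Or.inr (Or.inl ⟨L, r2, by simp⟩))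
        · exact Or.inr (Or.inr (Or.inr (Or.inl ⟨L, r1, by simp⟩)))
    have h2 : Cond (n-1) (stackSort L ++ stackSort [r1, r2]) ↔ (r1 = 1 ∨ r2 = 1) := by
      rw [hpair]
      constructor
      · rintro (⟨w, h⟩ | ⟨w, h⟩ | ⟨w, x, h⟩ | ⟨w, x, h⟩ | ⟨⟨w, h⟩, -⟩)
        · have h' : ((stackSort L ++ [p]) ++ [q]) = (w ++ [n-1]) ++ [2] := by simpa using h
          obtain ⟨h1', h2'⟩ := concat_inj' h'
          have := (concat_inj' h1').2
          omega
        · have h' : ((stackSort L ++ [p]) ++ [q]) = ((w ++ [n-1-1]) ++ [1]) ++ [n-1] := by simpa using h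
          obtain ⟨h1', h2'⟩ := concat_inj' h'
          have := (concat_inj' h1').2
          omega
        · have h' : ((stackSort L ++ [p]) ++ [q]) = ((w ++ [n-1]) ++ [1]) ++ [x] := by simpa using h
          obtain ⟨h1', h2'⟩ := concat_inj' h'
          have := (concat_inj' h1').2
          omega
        · have h' : ((stackSort L ++ [p]) ++ [q]) = ((w ++ [n-1]) ++ [x]) ++ [1] := by simpa using h
          have := (concat_inj' h').2
          omega
        · have h' : ((stackSort L ++ [p]) ++ [q]) = (w ++ [n-1-1]) ++ [1] := by simpa using h
          have := (concat_inj' h').2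
          omega
      · intro hP
        have hpeq : p = 1 := by omega
        by_cases hmem : (n-1) ∈ L
        · have hmaxL : listMax L = n - 1 := by
            have := le_listMax hmem; omega
          rw [hmaxL] at hu
          refine Or.inr (Or.inr (Or.inl ⟨u, q, ?_⟩))
          rw [hu, hpeq]; simp
        · have hq' : q = n - 1 := by
            rcases hcomplete (n-1) (by omega) (le_refl _) with hh | hh
            · exact absurd hh hmem
            · simp at hh; omega
          have hmem2 : (n-2) ∈ L := by
            rcases hcomplete (n-2) (by omega) (by omega) with hh | hh
            · exact hh
            · simp at hh; omega
          have hmaxL : listMax L = n - 2 := by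
            have hle2 : listMax L ≤ n - 2 := listMax_le (fun a ha => by
              have h1' := (hbL a ha).2
              have h2' : a ≠ n - 1 := fun he => hmem (he ▸ ha)
              omega)
            have := le_listMax hmem2
            omega
          rw [hmaxL] at hu
          refine Or.inr (Or.inl ⟨u, ?_⟩)
          rw [hu, hpeq, hq', show n-1-1 = n-2 by omega]; simp
    rw [h1, h2]
  -- ===================== case R = r1 :: r2 :: r3 :: R3 =====================
  · set R' : List ℕ := r1 :: r2 :: r3 :: R3 with hR'
    have hRlen : 3 ≤ R'.length := by simp [hR']
    have hRne : R' ≠ [] := by simp [hR']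
    have hRbound : ∀ a ∈ R', 1 ≤ a ∧ a ≤ n - 1 := fun a ha => by
      have := hbR a ha; omega
    obtain ⟨u, hu⟩ := stackSort_concat_max hRne
    have hndSR : (stackSort R').Nodup := nodup_stackSort ndR
    have hSRlen : (stackSort R').length = R'.length := length_stackSort R'
    have hBπ : ∃ v, L ++ n :: R' = v ++ R' := ⟨L ++ [n], by simp⟩
    have hBσ : ∃ v, stackSort L ++ stackSort R' = v ++ stackSort R' := ⟨stackSort L, rfl⟩
    have hkey := key_lemma (M := n-1) (by omega) ndR hRbound hRlen
    have h1 : Cond n (L ++ n :: R') ↔ ((∃ w, R' = w ++ [n-1, 1]) ∧ (n-2) ∈ R') := by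
      constructor
      · rintro (⟨w, h⟩ | ⟨w, h⟩ | ⟨w, x, h⟩ | ⟨w, x, h⟩ | ⟨⟨w, h⟩, hsub⟩)
        · obtain ⟨w', hw'⟩ := ends_trans hBπ ⟨w, h⟩ (by simp; omega)
          exact absurd (by rw [hw']; simp : n ∈ R') hnR
        · obtain ⟨w', hw'⟩ := ends_trans hBπ ⟨w, h⟩ (by simp; omega)
          exact absurd (by rw [hw']; simp : n ∈ R') hnR
        · obtain ⟨w', hw'⟩ := ends_trans hBπ ⟨w, h⟩ (by simp; omega)
          exact absurd (by rw [hw']; simp : n ∈ R') hnR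
        · obtain ⟨w', hw'⟩ := ends_trans hBπ ⟨w, h⟩ (by simp; omega)
          exact absurd (by rw [hw']; simp : n ∈ R') hnR
        · refine ⟨ends_trans hBπ ⟨w, h⟩ (by simp; omega), ?_⟩
          rw [List.sublist_append_iff] at hsub
          obtain ⟨s, t, hst, hsL, htR⟩ := hsub
          rcases s with _ | ⟨a, s'⟩
          · simp at hst
            rw [← hst] at htR
            rcases List.sublist_cons_iff.mp htR with hh | ⟨r, hr, hrR⟩
            · exact absurd (hh.subset (by simp)) hnR
            · have : r = [n-2] := by simpa using hr.symm
              rw [this] at hrR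
              exact hrR.subset (by simp)
          · have ha : a = n := by
              have := congrArg (fun l => l.head?) hst
              simpa using this.symm
            exact absurd (hsL.subset (by simp : a ∈ a :: s')) (ha ▸ hnL)
      · rintro ⟨⟨w, hw⟩, hmem2⟩
        refine Or.inr (Or.inr (Or.inr (Or.inr ⟨⟨L ++ n :: w, by rw [hw]; simp⟩, ?_⟩)))
        have hsub1 : ([n-2] : List ℕ).Sublist R' := List.singleton_sublist.mpr hmem2
        have hsub2 : ([n, n-2] : List ℕ).Sublist (n :: R') := hsub1.cons₂ n
        exact List.sublist_append_of_sublist_right hsub2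
    have h2 : Cond (n-1) (stackSort L ++ stackSort R') ↔
        ((∃ w, R' = w ++ [n-1, 1]) ∧ (n-2) ∈ R') := by
      constructor
      · rintro (⟨w, h⟩ | ⟨w, h⟩ | ⟨w, x, h⟩ | ⟨w, x, h⟩ | ⟨⟨w, h⟩, -⟩)
        · obtain ⟨w', hw'⟩ := ends_trans hBσ ⟨w, h⟩ (by rw [hSRlen]; simp; omega)
          have h' : u ++ [listMax R'] = (w' ++ [n-1]) ++ [2] := by rw [← hu, hw']; simp
          have hmax := (concat_inj' h').2
          have := nodup_length_le (k := 2) ndR (fun a ha => by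
            have h1' := (hRbound a ha).1
            have h2' := le_listMax ha
            omega)
          omega
        · obtain ⟨w', hw'⟩ := ends_trans hBσ ⟨w, h⟩ (by rw [hSRlen]; simp; omega)
          have hP := hkey.mp ⟨w', hw'⟩
          exact ⟨hP.1, by have := hP.2; rwa [show n-1-1 = n-2 by omega] at this⟩
        · obtain ⟨w', hw'⟩ := ends_trans hBσ ⟨w, h⟩ (by rw [hSRlen]; simp; omega)
          have h' : u ++ [listMax R'] = ((w' ++ [n-1]) ++ [1]) ++ [x] := by rw [← hu, hw']; simp
          obtain ⟨hueq, hxeq⟩ := concat_inj' h'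
          have hmemu : (n-1) ∈ u := by rw [hueq]; simp
          have hmemR : (n-1) ∈ R' := mem_stackSort.mp (by rw [hu]; simp [hmemu])
          have hmax : listMax R' = n - 1 := by
            have h1' := le_listMax hmemR
            have h2' : listMax R' ≤ n - 1 := listMax_le (fun a ha => (hRbound a ha).2)
            omega
          have hnd2 := hndSR
          rw [hu, hmax] at hnd2
          exact absurd hmemu (nodup_of_split (by simpa using hnd2)).1
        · obtain ⟨w', hw'⟩ := ends_trans hBσ ⟨w, h⟩ (by rw [hSRlen]; simp; omega)
          have h' : u ++ [listMax R'] = ((w' ++ [n-1]) ++ [x]) ++ [1] := by rw [← hu, hw']; simp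
          have hmax := (concat_inj' h').2
          have := nodup_length_le (k := 1) ndR (fun a ha => by
            have h1' := (hRbound a ha).1
            have h2' := le_listMax ha
            omega)
          omega
        · obtain ⟨w', hw'⟩ := ends_trans hBσ ⟨w, h⟩ (by rw [hSRlen]; simp; omega)
          have h' : u ++ [listMax R'] = (w' ++ [n-1-1]) ++ [1] := by rw [← hu, hw']; simp
          have hmax := (concat_inj' h').2
          have := nodup_length_le (k := 1) ndR (fun a ha => by
            have h1' := (hRbound a ha).1
            have h2' := le_listMax ha
            omega)
          omega
      · rintro ⟨hP1, hP2⟩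
        obtain ⟨w', hw'⟩ := hkey.mpr ⟨hP1, by rwa [show n-1-1 = n-2 by omega]⟩
        exact Or.inr (Or.inl ⟨stackSort L ++ w', by rw [hw']; simp⟩)
    rw [h1, h2]

lemma perm3_cases (π : List ℕ) (h : π.Perm [1,2,3]) :
    π = [1,2,3] ∨ π = [1,3,2] ∨ π = [2,1,3] ∨ π = [2,3,1] ∨ π = [3,1,2] ∨ π = [3,2,1] := by
  have hlen : π.length = 3 := by simpa using h.length_eq
  have hnd : π.Nodup := h.nodup_iff.mpr (by decide)
  match π, hlen, hnd, h with
  | [a,b,c], _, hnd, h =>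
    have ha : a ∈ [1,2,3] := h.mem_iff.mp (by simp)
    have hb : b ∈ [1,2,3] := h.mem_iff.mp (by simp)
    have hc : c ∈ [1,2,3] := h.mem_iff.mp (by simp)
    simp only [List.mem_cons, List.mem_singleton, List.not_mem_nil, or_false] at ha hb hc
    simp only [List.nodup_cons, List.mem_cons, List.mem_singleton, List.not_mem_nil] at hnd
    rcases ha with rfl|rfl|rfl <;> rcases hb with rfl|rfl|rfl <;> rcases hc with rfl|rfl|rfl <;>
      simp_all

lemma sS12 : stackSort [1,2] = [1,2] := by
  have := stackSort_pair (a := 1) (b := 2) (by omega); simpa using this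
lemma sS21 : stackSort [2,1] = [1,2] := by
  have := stackSort_pair (a := 2) (b := 1) (by omega); simpa using this
lemma sS123 : stackSort [1,2,3] = [1,2,3] := by
  have := stackSort_split [1,2] [] 3 (by decide) (by simp)
  simpa [sS12, stackSort_nil] using this
lemma sS132 : stackSort [1,3,2] = [1,2,3] := by
  have := stackSort_split [1] [2] 3 (by decide) (by decide)
  simpa [stackSort_singleton] using this
lemma sS213 : stackSort [2,1,3] = [1,2,3] := by
  have := stackSort_split [2,1] [] 3 (by decide) (by simp)
  simpa [sS21, stackSort_nil] using this
lemma sS231 : stackSort [2,3,1] = [2,1,3] := by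
  have := stackSort_split [2] [1] 3 (by decide) (by decide)
  simpa [stackSort_singleton] using this
lemma sS312 : stackSort [3,1,2] = [1,2,3] := by
  have := stackSort_split [] [1,2] 3 (by simp) (by decide)
  simpa [sS12, stackSort_nil] using this
lemma sS321 : stackSort [3,2,1] = [1,2,3] := by
  have := stackSort_split [] [2,1] 3 (by simp) (by decide)
  simpa [sS21, stackSort_nil] using this

lemma base_case (π : List ℕ) (hπ : π.Perm (List.range' 1 3)) :
    ssc π = 3 - 2 ↔ Cond 3 π := by
  have hr3 : List.range' 1 3 = [1,2,3] := by decide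
  rw [hr3] at hπ
  have hiter2 : ∀ l : List ℕ, stackSort^[2] l = stackSort (stackSort l) := fun l => by
    rw [show (2:ℕ) = 1+1 from rfl, Function.iterate_succ_apply, Function.iterate_one]
  rcases perm3_cases π hπ with rfl | rfl | rfl | rfl | rfl | rfl
  · -- [1,2,3] : ssc = 0, Cond false
    have hssc : ssc [1,2,3] = 0 := by
      rw [ssc_eq_iff (n := 3) (by rw [hr3])]
      exact ⟨by simp [hr3], by omega⟩
    refine iff_of_false (by omega) ?_
    rintro (⟨w,h⟩|⟨w,h⟩|⟨w,x,h⟩|⟨w,x,h⟩|⟨⟨w,h⟩,-⟩) <;>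
      (apply_fun List.reverse at h; simp at h)
  · -- [1,3,2] : ssc = 1, Cond true via (a)
    have hssc : ssc [1,3,2] = 1 := by
      rw [ssc_eq_iff (by rw [hr3]; exact hπ)]
      refine ⟨by simp [hr3, sS132], ?_⟩
      intro j hj
      interval_cases j
      simp [hr3]
    exact iff_of_true hssc (Or.inl ⟨[1], by decide⟩)
  · -- [2,1,3] : ssc = 1, Cond true via (b)
    have hssc : ssc [2,1,3] = 1 := by
      rw [ssc_eq_iff (by rw [hr3]; exact hπ)]
      refine ⟨by simp [hr3, sS213], ?_⟩
      intro j hj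
      interval_cases j
      simp [hr3]
    exact iff_of_true hssc (Or.inr (Or.inl ⟨[], by decide⟩))
  · -- [2,3,1] : ssc = 2, Cond false
    have hssc : ssc [2,3,1] = 2 := by
      rw [ssc_eq_iff (by rw [hr3]; exact hπ)]
      refine ⟨by rw [hiter2, sS231, sS213, hr3], ?_⟩
      intro j hj
      interval_cases j
      · simp [hr3]
      · simp [hr3, sS231]
    refine iff_of_false (by omega) ?_
    rintro (⟨w,h⟩|⟨w,h⟩|⟨w,x,h⟩|⟨w,x,h⟩|⟨⟨w,h⟩,-⟩) <;>
      (apply_fun List.reverse at h; simp at h)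
  · -- [3,1,2] : ssc = 1, Cond true via (c)
    have hssc : ssc [3,1,2] = 1 := by
      rw [ssc_eq_iff (by rw [hr3]; exact hπ)]
      refine ⟨by simp [hr3, sS312], ?_⟩
      intro j hj
      interval_cases j
      simp [hr3]
    exact iff_of_true hssc (Or.inr (Or.inr (Or.inl ⟨[], 2, by decide⟩)))
  · -- [3,2,1] : ssc = 1, Cond true via (d)
    have hssc : ssc [3,2,1] = 1 := by
      rw [ssc_eq_iff (by rw [hr3]; exact hπ)]
      refine ⟨by simp [hr3, sS321], ?_⟩
      intro j hj
      interval_cases j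
      simp [hr3]
    exact iff_of_true hssc (Or.inr (Or.inr (Or.inr (Or.inl ⟨[], 2, by decide⟩))))

lemma main_lemma : ∀ n, 3 ≤ n → ∀ π : List ℕ, π.Perm (List.range' 1 n) →
    (ssc π = n - 2 ↔ Cond n π) := by
  intro n
  induction n using Nat.strong_induction_on with
  | _ n ih =>
    intro hn π hπ
    rcases eq_or_lt_of_le hn with h3 | h4
    · subst h3; exact base_case π hπ
    · have hn4 : 4 ≤ n := h4
      obtain ⟨L, R, rfl, hb, hperm, hnd⟩ := split_plan (by omega) hπ
      obtain ⟨hnL, hnR, ndL, ndR⟩ := nodup_of_split hnd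
      have hσperm : (stackSort L ++ stackSort R).Perm (List.range' 1 (n-1)) :=
        ((stackSort_perm L).append (stackSort_perm R)).trans hperm
      have hIH := ih (n-1) (by omega) (by omega) _ hσperm
      have hcond := cond_equiv hn4 hnd hb hperm
      by_cases hid : L ++ n :: R = List.range' 1 n
      · have hssc0 : ssc (L ++ n :: R) = 0 := by
          rw [ssc_eq_iff hπ]
          exact ⟨by simpa using hid, by omega⟩
        have hR0 : R = [] := by
          rcases List.eq_nil_or_concat R with h | ⟨R0, a, rfl⟩
          · exact h
          · exfalso
            have h' : (L ++ n :: R0) ++ [a] = List.range' 1 (n-1) ++ [n] := by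
              rw [← range'_eq_concat n (by omega), ← hid]; simp
            have ha := (concat_inj' h').2
            exact hnR (by simp [ha])
        subst hR0
        have hL : L = List.range' 1 (n-1) := by
          have h' : L ++ [n] = List.range' 1 (n-1) ++ [n] := by
            rw [← range'_eq_concat n (by omega), ← hid]
          exact (concat_inj' h').1
        have hsscσ : ssc (stackSort L ++ stackSort []) = 0 := by
          rw [hL, stackSort_nil, List.append_nil, stackSort_range']
          rw [ssc_eq_iff (n := n-1) (List.Perm.refl _)]
          exact ⟨by simp, by omega⟩
        refine iff_of_false (by omega) (fun hc => ?_)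
        have := hIH.mpr (hcond.mp hc)
        omega
      · have hrec := ssc_recursion (by omega) hb hperm hid
        rw [hrec, hcond, ← hIH]
        omega

/-- For all `n ≥ 4`, a permutation `π` of `{1,…,n}` satisfies `ssc(π) = n−2` iff
(a) `π` ends with `n,2`; or (b) `π` ends with `(n−1),1,n`; or (c) `π` ends with
`n,1,x` for some letter `x`; or (d) `π` ends with `n,x,1` for some letter `x`;
or (e) `π` ends with `(n−1),1` and `n` occurs before `n−2` in `π`. -/
theorem ssc_eq_n_sub_two_iff (n : ℕ) (hn : 4 ≤ n) (π : List ℕ) (hπ : IsPermWord n π) :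
    ssc π = n - 2 ↔
      (∃ w : List ℕ, π = w ++ [n, 2]) ∨
      (∃ w : List ℕ, π = w ++ [n - 1, 1, n]) ∨
      (∃ (w : List ℕ) (x : ℕ), π = w ++ [n, 1, x]) ∨
      (∃ (w : List ℕ) (x : ℕ), π = w ++ [n, x, 1]) ∨
      ((∃ w : List ℕ, π = w ++ [n - 1, 1]) ∧ ([n, n - 2] : List ℕ).Sublist π) := by
  have := main_lemma n (by omega) π hπ
  rw [Cond] at this
  exact this
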